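/- Let g be a Lie algebra over ℂ acting on a vector space M, and let A, B be g-modules for a Lie algebra of the form g = V ⊗ ℂ[z, z^{-1}] with bracket [α z^m, β z^n] = ∑_{j≥0} C(m,j) (α_j β) z^{m+n-j}, where (V, α_j) are the modes of a vertex algebra. Define an action of g on the ℂ-vector space A ⊗_∞ B := ⊕_{(s,t) ∈ ℂ×ℕ} (A ⊗ B) by (α z^m)(v ⊗_{s,t} u) = v ⊗_{s,t} (α_m u) + ∑_{j≥0} C(m,j) (α_j v) ⊗_{s+m-j, t} u. Then this defines a g-module structure, i.e. [α z^m, β z^n](v ⊗_{s,t} u) = (α z^m)(β z^n)(v ⊗_{s,t} u) − (β z^n)(α z^m)(v ⊗_{s,t} u) for all α, β ∈ V, m, n ∈ ℤ, v ∈ A, u ∈ B, s ∈ ℂ, t ∈ ℕ. -/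

import Mathlib

open scoped TensorProduct

lemma scalar_id (m n : ℤ) (k r : ℕ) (hkr : k ≤ r) :
    ∑ ij ∈ Finset.HasAntidiagonal.antidiagonal r,
        Ring.choose m ij.1 * Ring.choose ((ij.1 : ℤ)) k * Ring.choose n ij.2
      = Ring.choose m k * Ring.choose (m + n - k) (r - k) := by
  rw [Finset.Nat.sum_antidiagonal_eq_sum_range_succ_mk]
  have hsplit : Finset.range (r + 1) = Finset.range k ∪ Finset.Ico k (r + 1) := by
    rw [Finset.range_eq_Ico, Finset.range_eq_Ico, Finset.Ico_union_Ico_eq_Ico (Nat.zero_le k) (by omega)]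
  rw [hsplit, Finset.sum_union (by
    simp [Finset.disjoint_left, Finset.mem_Ico]
    omega)]
  have h0 : ∑ i ∈ Finset.range k, Ring.choose m i * Ring.choose ((i : ℤ)) k * Ring.choose n (r - i) = 0 := by
    apply Finset.sum_eq_zero
    intro i hi
    rw [Ring.choose_natCast]
    rw [Nat.choose_eq_zero_of_lt (Finset.mem_range.mp hi)]
    simp
  rw [h0, zero_add]
  rw [Finset.sum_Ico_eq_sum_range]
  have key : ∀ i ∈ Finset.range (r + 1 - k),
      Ring.choose m (k + i) * Ring.choose (((k + i : ℕ) : ℤ)) k * Ring.choose n (r - (k + i))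
        = Ring.choose m k * (Ring.choose (m - k) i * Ring.choose n (r - k - i)) := by
    intro i hi
    rw [Ring.choose_natCast]
    have h1 : (Nat.choose (k + i) k) • Ring.choose m (k + i)
        = Ring.choose m k * Ring.choose (m - k) (k + i - k) :=
      Ring.choose_smul_choose m (Nat.le_add_right k i)
    rw [Nat.add_sub_cancel_left] at h1
    have : r - (k + i) = r - k - i := by omega
    rw [this]
    rw [mul_comm (Ring.choose m (k+i)) _, ← nsmul_eq_mul, h1]
    ring
  rw [Finset.sum_congr rfl key, ← Finset.mul_sum]
  congr 1
  have hv : Ring.choose ((m - k) + n) (r - k)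
      = ∑ ij ∈ Finset.HasAntidiagonal.antidiagonal (r - k), Ring.choose (m - k) ij.1 * Ring.choose n ij.2 :=
    Ring.add_choose_eq (r - k) (mul_comm _ _)
  have harg : m + n - (k : ℤ) = (m - k) + n := by ring
  rw [harg, hv, Finset.Nat.sum_antidiagonal_eq_sum_range_succ_mk]
  have hcount : r + 1 - k = (r - k) + 1 := by omega
  rw [hcount]

lemma group_sum {X : Type*} [AddCommGroup X] [Module ℂ X] (a : ℕ) (C D : ℕ → ℂ) (G : ℕ → X)
    (hG : ∀ r, a ≤ r → G r = 0) :
    ∑ i ∈ Finset.range a, ∑ j ∈ Finset.range a, (C i * D j) • G (i + j)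
      = ∑ r ∈ Finset.range a, (∑ ij ∈ Finset.HasAntidiagonal.antidiagonal r, C ij.1 * D ij.2) • G r := by
  rw [← Finset.sum_product']
  set s := (Finset.range a ×ˢ Finset.range a).filter (fun ij => ij.1 + ij.2 < a) with hs
  have h1 : ∑ ij ∈ Finset.range a ×ˢ Finset.range a, (C ij.1 * D ij.2) • G (ij.1 + ij.2)
      = ∑ ij ∈ s, (C ij.1 * D ij.2) • G (ij.1 + ij.2) := by
    apply (Finset.sum_subset (Finset.filter_subset _ _) ?_).symm
    intro ij hij hns
    rw [hG (ij.1 + ij.2) (by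
      simp only [hs, Finset.mem_filter, hij, true_and, not_lt] at hns
      exact hns), smul_zero]
  rw [h1]
  rw [← Finset.sum_fiberwise_of_maps_to (g := fun ij : ℕ × ℕ => ij.1 + ij.2) (t := Finset.range a)
    (fun ij hij => by
      simp only [hs, Finset.mem_filter] at hij
      exact Finset.mem_range.mpr hij.2)]
  apply Finset.sum_congr rfl
  intro r hr
  have hfib : s.filter (fun ij : ℕ × ℕ => ij.1 + ij.2 = r) = Finset.HasAntidiagonal.antidiagonal r := by
    ext ⟨i, j⟩
    simp only [hs, Finset.mem_filter, Finset.mem_product, Finset.mem_range,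
      Finset.HasAntidiagonal.mem_antidiagonal]
    constructor
    · rintro ⟨⟨⟨_, _⟩, _⟩, h⟩; exact h
    · intro h
      have := Finset.mem_range.mp hr
      omega
  rw [hfib, Finset.sum_smul]
  apply Finset.sum_congr rfl
  intro ij hij
  rw [Finset.HasAntidiagonal.mem_antidiagonal.mp hij]

lemma per_k {X : Type*} [AddCommGroup X] [Module ℂ X] (m n : ℤ) (k M N : ℕ) (hk : k < N)
    (G : ℕ → X) (hG : ∀ p : ℕ, M ≤ p → G (k + p) = 0) :
    ∑ i ∈ Finset.range (M + N), ∑ j ∈ Finset.range (M + N),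
        ((((Ring.choose m i * Ring.choose ((i : ℤ)) k : ℤ)) : ℂ)
          * (((Ring.choose n j : ℤ)) : ℂ)) • G (i + j)
      = ∑ p ∈ Finset.range (M + N),
          (((Ring.choose m k : ℤ) : ℂ)
            * (((Ring.choose (m + n - (k : ℤ)) p : ℤ)) : ℂ)) • G (k + p) := by
  have hG' : ∀ r, M + N ≤ r → G r = 0 := by
    intro r hr
    have h1 : r = k + (r - k) := by omega
    rw [h1]
    exact hG _ (by omega)
  rw [group_sum (M + N) _ _ G hG']
  have hsplit : Finset.range (M + N) = Finset.range k ∪ Finset.Ico k (M + N) := by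
    rw [Finset.range_eq_Ico, Finset.range_eq_Ico, Finset.Ico_union_Ico_eq_Ico (Nat.zero_le k) (by omega)]
  have h0 : ∑ r ∈ Finset.range k,
      (∑ ij ∈ Finset.HasAntidiagonal.antidiagonal r,
        (((Ring.choose m ij.1 * Ring.choose ((ij.1 : ℤ)) k : ℤ)) : ℂ)
          * (((Ring.choose n ij.2 : ℤ)) : ℂ)) • G r = 0 := by
    apply Finset.sum_eq_zero
    intro r hr
    have : (∑ ij ∈ Finset.HasAntidiagonal.antidiagonal r,
        (((Ring.choose m ij.1 * Ring.choose ((ij.1 : ℤ)) k : ℤ)) : ℂ)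
          * (((Ring.choose n ij.2 : ℤ)) : ℂ)) = 0 := by
      apply Finset.sum_eq_zero
      intro ij hij
      have hij1 : ij.1 ≤ r := by have := Finset.HasAntidiagonal.mem_antidiagonal.mp hij; omega
      have : ij.1 < k := lt_of_le_of_lt hij1 (Finset.mem_range.mp hr)
      rw [Ring.choose_natCast, Nat.choose_eq_zero_of_lt this]
      simp
    rw [this, zero_smul]
  -- RHS: restrict to range (M+N-k), then reindex
  have hRHS : ∑ p ∈ Finset.range (M + N),
      (((Ring.choose m k : ℤ) : ℂ)
        * (((Ring.choose (m + n - (k : ℤ)) p : ℤ)) : ℂ)) • G (k + p)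
    = ∑ p ∈ Finset.range (M + N - k),
      (((Ring.choose m k : ℤ) : ℂ)
        * (((Ring.choose (m + n - (k : ℤ)) p : ℤ)) : ℂ)) • G (k + p) := by
    apply (Finset.sum_subset (Finset.range_subset_range.mpr (by omega)) ?_).symm
    intro p _ hp
    rw [hG p (by simp only [Finset.mem_range, not_lt] at hp; omega), smul_zero]
  have hIco : ∑ p ∈ Finset.range (M + N - k),
      (((Ring.choose m k : ℤ) : ℂ) * (((Ring.choose (m + n - (k : ℤ)) p : ℤ)) : ℂ)) • G (k + p)
    = ∑ r ∈ Finset.Ico k (M + N),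
      (((Ring.choose m k : ℤ) : ℂ) * (((Ring.choose (m + n - (k : ℤ)) (r - k) : ℤ)) : ℂ)) • G r := by
    rw [Finset.sum_Ico_eq_sum_range]
    apply Finset.sum_congr rfl
    intro p _
    rw [Nat.add_sub_cancel_left]
  rw [hRHS, hIco, hsplit, Finset.sum_union (by
    simp [Finset.disjoint_left, Finset.mem_Ico]; omega), h0, zero_add]
  apply Finset.sum_congr rfl
  intro r hr
  obtain ⟨hkr, _⟩ := Finset.mem_Ico.mp hr
  congr 1
  rw [← Int.cast_mul, ← scalar_id m n k r hkr, Int.cast_sum]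
  apply Finset.sum_congr rfl
  intro ij _
  push_cast
  ring

lemma single_finsum {α M : Type*} [AddCommMonoid M] (a : α) {ι : Type*} (s : Finset ι) (f : ι → M) :
    Finsupp.single a (∑ i ∈ s, f i) = ∑ i ∈ s, Finsupp.single a (f i) :=
  map_sum (Finsupp.singleAddHom a) f s

open scoped TensorProduct
/-- Lemma 4.3: the Lie algebra `V ⊗ ℂ[z,z⁻¹]` (with bracket
`[α zᵐ, β zⁿ] = ∑_{j≥0} C(m,j) (α_j β) z^{m+n-j}`) acts on
`A ⊗_∞ B = ⊕_{(s,t) ∈ ℂ×ℕ} A ⊗ B` by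
`(α zᵐ)(v ⊗_{s,t} u) = v ⊗_{s,t} (α_m u) + ∑_{j≥0} C(m,j) (α_j v) ⊗_{s+m-j,t} u`:
any linear action `act` satisfying this formula on generators satisfies the
module (commutator) identity on generators. Here `μ α j β` denotes `α_j β`, and
`aA`, `aB` are the modes on `A` and `B`, satisfying the Borcherds commutator
formula and the vanishing conditions making all sums finite. -/
theorem tensor_infty_is_module
    {V A B : Type*} [AddCommGroup V] [Module ℂ V] [AddCommGroup A] [Module ℂ A] [AddCommGroup B] [Module ℂ B]
    (μ : V → ℕ → V → V)
    (aA : V → ℤ → A →ₗ[ℂ] A) (aB : V → ℤ → B →ₗ[ℂ] B)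
    (hvanV : ∀ α β : V, ∃ N, ∀ j, N ≤ j → μ α j β = 0)
    (hvanA : ∀ (α : V) (v : A), ∃ N, ∀ j, N ≤ j → aA α (j : ℤ) v = 0)
    (hA : ∀ (α β : V) (N : ℕ), (∀ j, N ≤ j → μ α j β = 0) → ∀ (m n : ℤ) (v : A),
      aA α m (aA β n v) - aA β n (aA α m v)
        = ∑ j ∈ Finset.range N,
            ((Ring.choose m j : ℤ) : ℂ) • aA (μ α j β) (m + n - (j : ℤ)) v)
    (hB : ∀ (α β : V) (N : ℕ), (∀ j, N ≤ j → μ α j β = 0) → ∀ (m n : ℤ) (u : B),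
      aB α m (aB β n u) - aB β n (aB α m u)
        = ∑ j ∈ Finset.range N,
            ((Ring.choose m j : ℤ) : ℂ) • aB (μ α j β) (m + n - (j : ℤ)) u)
    (act : V → ℤ → ((ℂ × ℕ) →₀ (A ⊗[ℂ] B)) →ₗ[ℂ] ((ℂ × ℕ) →₀ (A ⊗[ℂ] B)))
    (hact : ∀ (α : V) (m : ℤ) (s : ℂ) (t : ℕ) (v : A) (u : B) (N : ℕ),
      (∀ j, N ≤ j → aA α (j : ℤ) v = 0) →
      act α m (Finsupp.single (s, t) (v ⊗ₜ[ℂ] u))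
        = Finsupp.single (s, t) (v ⊗ₜ[ℂ] aB α m u)
          + ∑ j ∈ Finset.range N,
              ((Ring.choose m j : ℤ) : ℂ) •
                Finsupp.single (s + (m : ℂ) - (j : ℂ), t) ((aA α (j : ℤ) v) ⊗ₜ[ℂ] u)) :
    ∀ (α β : V) (m n : ℤ) (s : ℂ) (t : ℕ) (v : A) (u : B) (N : ℕ),
      (∀ j, N ≤ j → μ α j β = 0) →
      act α m (act β n (Finsupp.single (s, t) (v ⊗ₜ[ℂ] u)))
          - act β n (act α m (Finsupp.single (s, t) (v ⊗ₜ[ℂ] u)))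
        = ∑ j ∈ Finset.range N,
            ((Ring.choose m j : ℤ) : ℂ) •
              act (μ α j β) (m + n - (j : ℤ)) (Finsupp.single (s, t) (v ⊗ₜ[ℂ] u)) := by
  intro α β m n s t v u N hN
  classical
  have hvanA' : ∀ (γ : V) (w : A), ∃ N' : ℕ, ∀ j : ℕ, N' ≤ j → aA γ (j : ℤ) w = 0 := by
    intro γ w
    obtain ⟨Nz, hNz⟩ := hvanA γ w
    exact ⟨Nz.toNat, fun j hj => hNz j (by omega)⟩
  obtain ⟨N1, hN1⟩ := hvanA' α v
  obtain ⟨N2, hN2⟩ := hvanA' β v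
  choose f hf using fun j : ℕ => hvanA' α (aA β (j : ℤ) v)
  choose g hg using fun i : ℕ => hvanA' β (aA α (i : ℤ) v)
  choose e he using fun k : ℕ => hvanA' (μ α k β) v
  set M : ℕ := N1 ⊔ N2 ⊔ (Finset.range N2).sup f ⊔ (Finset.range N1).sup g
      ⊔ (Finset.range N).sup e with hMdef
  have hN1M : N1 ≤ M := le_sup_of_le_left (le_sup_of_le_left (le_sup_of_le_left le_sup_left))
  have hN2M : N2 ≤ M := le_sup_of_le_left (le_sup_of_le_left (le_sup_of_le_left le_sup_right))
  have hfM : ∀ j, j < N2 → f j ≤ M := fun j hj =>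
    le_sup_of_le_left (le_sup_of_le_left (le_sup_of_le_right (Finset.le_sup (Finset.mem_range.mpr hj))))
  have hgM : ∀ i, i < N1 → g i ≤ M := fun i hi =>
    le_sup_of_le_left (le_sup_of_le_right (Finset.le_sup (Finset.mem_range.mpr hi)))
  have heM : ∀ k, k < N → e k ≤ M := fun k hk =>
    le_sup_of_le_right (Finset.le_sup (Finset.mem_range.mpr hk))
  have P1 : ∀ i, M + N ≤ i → aA α (i : ℤ) v = 0 := fun i hi => hN1 i (by omega)
  have P2 : ∀ j, M + N ≤ j → aA β (j : ℤ) v = 0 := fun j hj => hN2 j (by omega)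
  have P3 : ∀ (j i : ℕ), M + N ≤ i → aA α (i : ℤ) (aA β (j : ℤ) v) = 0 := by
    intro j i hi
    by_cases hj : j < N2
    · exact hf j i (by have := hfM j hj; omega)
    · rw [hN2 j (by omega), map_zero]
  have P4 : ∀ (i j : ℕ), M + N ≤ j → aA β (j : ℤ) (aA α (i : ℤ) v) = 0 := by
    intro i j hj
    by_cases hi : i < N1
    · exact hg i j (by have := hgM i hi; omega)
    · rw [hN1 i (by omega), map_zero]
  have P5 : ∀ k, k < N → ∀ p, M ≤ p → aA (μ α k β) (p : ℤ) v = 0 := fun k hk p hp =>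
    he k p (by have := heM k hk; omega)
  have EB := hact β n s t v u (M + N) P2
  have EA := hact α m s t v u (M + N) P1
  have EAB : act α m (act β n (Finsupp.single (s, t) (v ⊗ₜ[ℂ] u)))
      = (Finsupp.single (s, t) (v ⊗ₜ[ℂ] aB α m (aB β n u))
          + ∑ i ∈ Finset.range (M + N), ((Ring.choose m i : ℤ) : ℂ) •
              Finsupp.single (s + (m : ℂ) - (i : ℂ), t) ((aA α (i : ℤ) v) ⊗ₜ[ℂ] aB β n u))
        + (∑ j ∈ Finset.range (M + N), ((Ring.choose n j : ℤ) : ℂ) •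
              Finsupp.single (s + (n : ℂ) - (j : ℂ), t) ((aA β (j : ℤ) v) ⊗ₜ[ℂ] aB α m u)
          + ∑ j ∈ Finset.range (M + N), ∑ i ∈ Finset.range (M + N),
              (((Ring.choose n j : ℤ) : ℂ) * ((Ring.choose m i : ℤ) : ℂ)) •
                Finsupp.single (s + (n : ℂ) - (j : ℂ) + (m : ℂ) - (i : ℂ), t)
                  ((aA α (i : ℤ) (aA β (j : ℤ) v)) ⊗ₜ[ℂ] u)) := by
    rw [EB, map_add, map_sum, hact α m s t v (aB β n u) (M + N) P1]
    congr 1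
    rw [← Finset.sum_add_distrib]
    apply Finset.sum_congr rfl
    intro j _
    rw [map_smul, hact α m (s + (n : ℂ) - (j : ℂ)) t (aA β (j : ℤ) v) u (M + N) (P3 j),
      smul_add, Finset.smul_sum]
    congr 1
    apply Finset.sum_congr rfl
    intro i _
    rw [smul_smul]
  have EBA : act β n (act α m (Finsupp.single (s, t) (v ⊗ₜ[ℂ] u)))
      = (Finsupp.single (s, t) (v ⊗ₜ[ℂ] aB β n (aB α m u))
          + ∑ j ∈ Finset.range (M + N), ((Ring.choose n j : ℤ) : ℂ) •
              Finsupp.single (s + (n : ℂ) - (j : ℂ), t) ((aA β (j : ℤ) v) ⊗ₜ[ℂ] aB α m u))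
        + (∑ i ∈ Finset.range (M + N), ((Ring.choose m i : ℤ) : ℂ) •
              Finsupp.single (s + (m : ℂ) - (i : ℂ), t) ((aA α (i : ℤ) v) ⊗ₜ[ℂ] aB β n u)
          + ∑ i ∈ Finset.range (M + N), ∑ j ∈ Finset.range (M + N),
              (((Ring.choose m i : ℤ) : ℂ) * ((Ring.choose n j : ℤ) : ℂ)) •
                Finsupp.single (s + (m : ℂ) - (i : ℂ) + (n : ℂ) - (j : ℂ), t)
                  ((aA β (j : ℤ) (aA α (i : ℤ) v)) ⊗ₜ[ℂ] u)) := by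
    rw [EA, map_add, map_sum, hact β n s t v (aB α m u) (M + N) P2]
    congr 1
    rw [← Finset.sum_add_distrib]
    apply Finset.sum_congr rfl
    intro i _
    rw [map_smul, hact β n (s + (m : ℂ) - (i : ℂ)) t (aA α (i : ℤ) v) u (M + N)
      (fun j hj => P4 i j hj), smul_add, Finset.smul_sum]
    congr 1
    apply Finset.sum_congr rfl
    intro j _
    rw [smul_smul]
  have Ediff : act α m (act β n (Finsupp.single (s, t) (v ⊗ₜ[ℂ] u)))
        - act β n (act α m (Finsupp.single (s, t) (v ⊗ₜ[ℂ] u)))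
      = (Finsupp.single (s, t) (v ⊗ₜ[ℂ] aB α m (aB β n u))
          - Finsupp.single (s, t) (v ⊗ₜ[ℂ] aB β n (aB α m u)))
        + (∑ j ∈ Finset.range (M + N), ∑ i ∈ Finset.range (M + N),
              (((Ring.choose n j : ℤ) : ℂ) * ((Ring.choose m i : ℤ) : ℂ)) •
                Finsupp.single (s + (n : ℂ) - (j : ℂ) + (m : ℂ) - (i : ℂ), t)
                  ((aA α (i : ℤ) (aA β (j : ℤ) v)) ⊗ₜ[ℂ] u)
          - ∑ i ∈ Finset.range (M + N), ∑ j ∈ Finset.range (M + N),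
              (((Ring.choose m i : ℤ) : ℂ) * ((Ring.choose n j : ℤ) : ℂ)) •
                Finsupp.single (s + (m : ℂ) - (i : ℂ) + (n : ℂ) - (j : ℂ), t)
                  ((aA β (j : ℤ) (aA α (i : ℤ) v)) ⊗ₜ[ℂ] u)) := by
    rw [EAB, EBA]; abel
  have hpart1 : Finsupp.single (s, t) (v ⊗ₜ[ℂ] aB α m (aB β n u))
        - Finsupp.single (s, t) (v ⊗ₜ[ℂ] aB β n (aB α m u))
      = ∑ k ∈ Finset.range N, ((Ring.choose m k : ℤ) : ℂ) •
          Finsupp.single (s, t) (v ⊗ₜ[ℂ] aB (μ α k β) (m + n - (k : ℤ)) u) := by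
    rw [← Finsupp.single_sub, ← TensorProduct.tmul_sub, hB α β N hN m n u,
      TensorProduct.tmul_sum, single_finsum]
    apply Finset.sum_congr rfl
    intro k _
    rw [TensorProduct.tmul_smul, ← Finsupp.smul_single]
  have hT4a : ∑ j ∈ Finset.range (M + N), ∑ i ∈ Finset.range (M + N),
        (((Ring.choose n j : ℤ) : ℂ) * ((Ring.choose m i : ℤ) : ℂ)) •
          Finsupp.single (s + (n : ℂ) - (j : ℂ) + (m : ℂ) - (i : ℂ), t)
            ((aA α (i : ℤ) (aA β (j : ℤ) v)) ⊗ₜ[ℂ] u)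
      = ∑ i ∈ Finset.range (M + N), ∑ j ∈ Finset.range (M + N),
        (((Ring.choose m i : ℤ) : ℂ) * ((Ring.choose n j : ℤ) : ℂ)) •
          Finsupp.single (s + (m : ℂ) - (i : ℂ) + (n : ℂ) - (j : ℂ), t)
            ((aA α (i : ℤ) (aA β (j : ℤ) v)) ⊗ₜ[ℂ] u) := by
    rw [Finset.sum_comm]
    apply Finset.sum_congr rfl
    intro i _
    apply Finset.sum_congr rfl
    intro j _
    have hkey : s + (n : ℂ) - (j : ℂ) + (m : ℂ) - (i : ℂ)
        = s + (m : ℂ) - (i : ℂ) + (n : ℂ) - (j : ℂ) := by ring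
    rw [hkey, mul_comm]
  have hD2 : ∑ i ∈ Finset.range (M + N), ∑ j ∈ Finset.range (M + N),
        (((Ring.choose m i : ℤ) : ℂ) * ((Ring.choose n j : ℤ) : ℂ)) •
          Finsupp.single (s + (m : ℂ) - (i : ℂ) + (n : ℂ) - (j : ℂ), t)
            ((aA α (i : ℤ) (aA β (j : ℤ) v)) ⊗ₜ[ℂ] u)
      - ∑ i ∈ Finset.range (M + N), ∑ j ∈ Finset.range (M + N),
        (((Ring.choose m i : ℤ) : ℂ) * ((Ring.choose n j : ℤ) : ℂ)) •
          Finsupp.single (s + (m : ℂ) - (i : ℂ) + (n : ℂ) - (j : ℂ), t)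
            ((aA β (j : ℤ) (aA α (i : ℤ) v)) ⊗ₜ[ℂ] u)
      = ∑ i ∈ Finset.range (M + N), ∑ j ∈ Finset.range (M + N), ∑ k ∈ Finset.range N,
          ((((Ring.choose m i : ℤ) : ℂ) * ((Ring.choose n j : ℤ) : ℂ))
              * ((Ring.choose ((i : ℤ)) k : ℤ) : ℂ)) •
            Finsupp.single (s + (m : ℂ) - (i : ℂ) + (n : ℂ) - (j : ℂ), t)
              ((aA (μ α k β) ((i : ℤ) + (j : ℤ) - (k : ℤ)) v) ⊗ₜ[ℂ] u) := by
    rw [← Finset.sum_sub_distrib]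
    apply Finset.sum_congr rfl
    intro i _
    rw [← Finset.sum_sub_distrib]
    apply Finset.sum_congr rfl
    intro j _
    rw [← smul_sub, ← Finsupp.single_sub, ← TensorProduct.sub_tmul,
      hA α β N hN (i : ℤ) (j : ℤ) v, TensorProduct.sum_tmul, single_finsum, Finset.smul_sum]
    apply Finset.sum_congr rfl
    intro k _
    rw [← TensorProduct.smul_tmul', ← Finsupp.smul_single, smul_smul]
  have ERHS : ∑ k ∈ Finset.range N, ((Ring.choose m k : ℤ) : ℂ) •
        act (μ α k β) (m + n - (k : ℤ)) (Finsupp.single (s, t) (v ⊗ₜ[ℂ] u))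
      = ∑ k ∈ Finset.range N, ((Ring.choose m k : ℤ) : ℂ) •
          Finsupp.single (s, t) (v ⊗ₜ[ℂ] aB (μ α k β) (m + n - (k : ℤ)) u)
        + ∑ k ∈ Finset.range N, ∑ p ∈ Finset.range (M + N),
            (((Ring.choose m k : ℤ) : ℂ) * ((Ring.choose (m + n - (k : ℤ)) p : ℤ) : ℂ)) •
              Finsupp.single (s + ((m + n - (k : ℤ) : ℤ) : ℂ) - (p : ℂ), t)
                ((aA (μ α k β) (p : ℤ) v) ⊗ₜ[ℂ] u) := by
    rw [← Finset.sum_add_distrib]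
    apply Finset.sum_congr rfl
    intro k hk
    rw [hact (μ α k β) (m + n - (k : ℤ)) s t v u (M + N)
      (fun p hp => P5 k (Finset.mem_range.mp hk) p (by omega)), smul_add, Finset.smul_sum]
    congr 1
    apply Finset.sum_congr rfl
    intro p _
    rw [smul_smul]
  rw [Ediff, hpart1, hT4a, hD2, ERHS]
  congr 1
  -- reorder the triple sum to put k outermost
  have hswap : ∑ i ∈ Finset.range (M + N), ∑ j ∈ Finset.range (M + N), ∑ k ∈ Finset.range N,
        ((((Ring.choose m i : ℤ) : ℂ) * ((Ring.choose n j : ℤ) : ℂ))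
            * ((Ring.choose ((i : ℤ)) k : ℤ) : ℂ)) •
          Finsupp.single (s + (m : ℂ) - (i : ℂ) + (n : ℂ) - (j : ℂ), t)
            ((aA (μ α k β) ((i : ℤ) + (j : ℤ) - (k : ℤ)) v) ⊗ₜ[ℂ] u)
      = ∑ k ∈ Finset.range N, ∑ i ∈ Finset.range (M + N), ∑ j ∈ Finset.range (M + N),
        ((((Ring.choose m i : ℤ) : ℂ) * ((Ring.choose n j : ℤ) : ℂ))
            * ((Ring.choose ((i : ℤ)) k : ℤ) : ℂ)) •
          Finsupp.single (s + (m : ℂ) - (i : ℂ) + (n : ℂ) - (j : ℂ), t)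
            ((aA (μ α k β) ((i : ℤ) + (j : ℤ) - (k : ℤ)) v) ⊗ₜ[ℂ] u) := by
    calc ∑ i ∈ Finset.range (M + N), ∑ j ∈ Finset.range (M + N), ∑ k ∈ Finset.range N,
          ((((Ring.choose m i : ℤ) : ℂ) * ((Ring.choose n j : ℤ) : ℂ))
              * ((Ring.choose ((i : ℤ)) k : ℤ) : ℂ)) •
            Finsupp.single (s + (m : ℂ) - (i : ℂ) + (n : ℂ) - (j : ℂ), t)
              ((aA (μ α k β) ((i : ℤ) + (j : ℤ) - (k : ℤ)) v) ⊗ₜ[ℂ] u)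
        = ∑ i ∈ Finset.range (M + N), ∑ k ∈ Finset.range N, ∑ j ∈ Finset.range (M + N),
          ((((Ring.choose m i : ℤ) : ℂ) * ((Ring.choose n j : ℤ) : ℂ))
              * ((Ring.choose ((i : ℤ)) k : ℤ) : ℂ)) •
            Finsupp.single (s + (m : ℂ) - (i : ℂ) + (n : ℂ) - (j : ℂ), t)
              ((aA (μ α k β) ((i : ℤ) + (j : ℤ) - (k : ℤ)) v) ⊗ₜ[ℂ] u) := by
          apply Finset.sum_congr rfl
          intro i _
          exact Finset.sum_comm
      _ = _ := Finset.sum_comm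
  rw [hswap]
  apply Finset.sum_congr rfl
  intro k hk
  have hkN : k < N := Finset.mem_range.mp hk
  have hG : ∀ p : ℕ, M ≤ p →
      (fun r : ℕ => Finsupp.single (s + (m : ℂ) + (n : ℂ) - (r : ℂ), t)
        ((aA (μ α k β) ((r : ℤ) - (k : ℤ)) v) ⊗ₜ[ℂ] u)) (k + p) = 0 := by
    intro p hp
    simp only
    have hidx : ((k + p : ℕ) : ℤ) - (k : ℤ) = (p : ℤ) := by push_cast; ring
    rw [hidx, P5 k hkN p hp, TensorProduct.zero_tmul, Finsupp.single_zero]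
  have hper := per_k m n k M N hkN
    (fun r : ℕ => Finsupp.single (s + (m : ℂ) + (n : ℂ) - (r : ℂ), t)
      ((aA (μ α k β) ((r : ℤ) - (k : ℤ)) v) ⊗ₜ[ℂ] u)) hG
  calc ∑ i ∈ Finset.range (M + N), ∑ j ∈ Finset.range (M + N),
        ((((Ring.choose m i : ℤ) : ℂ) * ((Ring.choose n j : ℤ) : ℂ))
            * ((Ring.choose ((i : ℤ)) k : ℤ) : ℂ)) •
          Finsupp.single (s + (m : ℂ) - (i : ℂ) + (n : ℂ) - (j : ℂ), t)
            ((aA (μ α k β) ((i : ℤ) + (j : ℤ) - (k : ℤ)) v) ⊗ₜ[ℂ] u)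
      = ∑ i ∈ Finset.range (M + N), ∑ j ∈ Finset.range (M + N),
        ((((Ring.choose m i * Ring.choose ((i : ℤ)) k : ℤ)) : ℂ)
            * (((Ring.choose n j : ℤ)) : ℂ)) •
          Finsupp.single (s + (m : ℂ) + (n : ℂ) - ((i + j : ℕ) : ℂ), t)
            ((aA (μ α k β) (((i + j : ℕ) : ℤ) - (k : ℤ)) v) ⊗ₜ[ℂ] u) := by
        apply Finset.sum_congr rfl
        intro i _
        apply Finset.sum_congr rfl
        intro j _
        have hsc : (((Ring.choose m i : ℤ) : ℂ) * ((Ring.choose n j : ℤ) : ℂ))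
            * ((Ring.choose ((i : ℤ)) k : ℤ) : ℂ)
            = (((Ring.choose m i * Ring.choose ((i : ℤ)) k : ℤ)) : ℂ)
                * (((Ring.choose n j : ℤ)) : ℂ) := by push_cast; ring
        have hkey : s + (m : ℂ) - (i : ℂ) + (n : ℂ) - (j : ℂ)
            = s + (m : ℂ) + (n : ℂ) - ((i + j : ℕ) : ℂ) := by push_cast; ring
        have hidx : (i : ℤ) + (j : ℤ) - (k : ℤ) = ((i + j : ℕ) : ℤ) - (k : ℤ) := by
          push_cast; ring
        rw [hsc, hkey, hidx]
    _ = ∑ p ∈ Finset.range (M + N),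
          (((Ring.choose m k : ℤ) : ℂ)
              * (((Ring.choose (m + n - (k : ℤ)) p : ℤ)) : ℂ)) •
            Finsupp.single (s + (m : ℂ) + (n : ℂ) - ((k + p : ℕ) : ℂ), t)
              ((aA (μ α k β) (((k + p : ℕ) : ℤ) - (k : ℤ)) v) ⊗ₜ[ℂ] u) := hper
    _ = ∑ p ∈ Finset.range (M + N),
          (((Ring.choose m k : ℤ) : ℂ) * ((Ring.choose (m + n - (k : ℤ)) p : ℤ) : ℂ)) •
            Finsupp.single (s + ((m + n - (k : ℤ) : ℤ) : ℂ) - (p : ℂ), t)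
              ((aA (μ α k β) (p : ℤ) v) ⊗ₜ[ℂ] u) := by
        apply Finset.sum_congr rfl
        intro p _
        have hkey : s + (m : ℂ) + (n : ℂ) - ((k + p : ℕ) : ℂ)
            = s + ((m + n - (k : ℤ) : ℤ) : ℂ) - (p : ℂ) := by push_cast; ring
        have hidx : ((k + p : ℕ) : ℤ) - (k : ℤ) = (p : ℤ) := by push_cast; ring
        rw [hkey, hidx]
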